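/- Fix m ∈ ℕ. Define g_m : (−1,1) → ℝ by g_m(x) = (1 − x²)^(m + 5/2) (real power), and define Q_m : (−1,1) → ℝ by Q_m(x) = ((−1)^m / (2^m · m!)) · (1 − x²)^(−5/2) · (d^m g_m/dx^m)(x), i.e., Q_m is given by the Rodrigues formula for the Jacobi polynomial P_m^{(5/2,5/2)}. Then for every x ∈ (−1,1), (1 − x²)·Q_m''(x) − 7x·Q_m'(x) + m(m+6)·Q_m(x) = 0. -/

import Mathlib

open Real

/-- The Rodrigues formula for the Jacobi polynomial `P_m^{(5/2,5/2)}`: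
`Q_m(x) = ((−1)^m / (2^m m!)) (1 − x²)^{−5/2} (d/dx)^m (1 − x²)^{m+5/2}`. -/
noncomputable def rodriguesJacobi (m : ℕ) (x : ℝ) : ℝ :=
  ((-1 : ℝ) ^ m / (2 ^ m * (Nat.factorial m : ℝ))) * (1 - x ^ 2) ^ (-(5 : ℝ) / 2)
    * iteratedDeriv m (fun t : ℝ => (1 - t ^ 2) ^ ((m : ℝ) + 5 / 2)) x

open scoped ContDiff

noncomputable def gfun (m : ℕ) : ℝ → ℝ := fun t : ℝ => (1 - t ^ 2) ^ ((m : ℝ) + 5 / 2)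

lemma hApos {x : ℝ} (hx : x ∈ Set.Ioo (-1:ℝ) 1) : 0 < 1 - x ^ 2 := by
  obtain ⟨h1, h2⟩ := hx; nlinarith

lemma gfun_smooth (m : ℕ) : ContDiffOn ℝ ∞ (gfun m) (Set.Ioo (-1:ℝ) 1) := by
  apply ContDiffOn.rpow_const_of_ne
  · exact (contDiff_const.sub (contDiff_id.pow 2)).contDiffOn
  · exact fun t ht => (hApos ht).ne'

lemma it_smooth (m : ℕ) (n : ℕ) :
    ContDiffOn ℝ ∞ (iteratedDeriv n (gfun m)) (Set.Ioo (-1:ℝ) 1) := by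
  induction n with
  | zero => simpa using gfun_smooth m
  | succ n ih =>
    rw [iteratedDeriv_succ]
    exact ((contDiffOn_infty_iff_deriv_of_isOpen isOpen_Ioo).1 ih).2

lemma hD (m n : ℕ) {x : ℝ} (hx : x ∈ Set.Ioo (-1:ℝ) 1) :
    HasDerivAt (iteratedDeriv n (gfun m)) (iteratedDeriv (n+1) (gfun m) x) x := by
  have h := ((contDiffOn_infty_iff_deriv_of_isOpen isOpen_Ioo).1 (it_smooth m n)).1
  have hd : DifferentiableAt ℝ (iteratedDeriv n (gfun m)) x :=
    (h x hx).differentiableAt (isOpen_Ioo.mem_nhds hx)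
  rw [iteratedDeriv_succ]
  exact hd.hasDerivAt

lemma E0 (m : ℕ) {x : ℝ} (hx : x ∈ Set.Ioo (-1:ℝ) 1) :
    (1 - x ^ 2) * iteratedDeriv 1 (gfun m) x
      = -(2 * (m:ℝ) + 5) * x * gfun m x := by
  have hA := hApos hx
  set p : ℝ := (m : ℝ) + 5 / 2 with hp
  have hf : HasDerivAt (fun t : ℝ => 1 - t ^ 2) (-(2 * x)) x := by
    simpa using (hasDerivAt_pow 2 x).const_sub 1
  have hg : HasDerivAt (gfun m) (-(2 * x) * p * (1 - x ^ 2) ^ (p - 1)) x :=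
    hf.rpow_const (Or.inl hA.ne')
  have h1 : iteratedDeriv 1 (gfun m) x = -(2 * x) * p * (1 - x ^ 2) ^ (p - 1) := by
    rw [iteratedDeriv_one]; exact hg.deriv
  have key : (1 - x ^ 2) * (1 - x ^ 2) ^ (p - 1) = (1 - x ^ 2) ^ p := by
    have := Real.rpow_add hA 1 (p - 1)
    rw [Real.rpow_one, show (1:ℝ) + (p - 1) = p by ring] at this
    exact this.symm
  rw [h1]
  have : gfun m x = (1 - x ^ 2) ^ p := rfl
  rw [this]
  calc (1 - x ^ 2) * (-(2 * x) * p * (1 - x ^ 2) ^ (p - 1))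
      = (-(2 * x) * p) * ((1 - x ^ 2) * (1 - x ^ 2) ^ (p - 1)) := by ring
    _ = -(2 * (m:ℝ) + 5) * x * (1 - x ^ 2) ^ p := by rw [key, hp]; ring

lemma jacobi_aux (m : ℕ) : ∀ n : ℕ, ∀ x ∈ Set.Ioo (-1:ℝ) 1,
    (1 - x ^ 2) * iteratedDeriv (n + 2) (gfun m) x
      = (2 * (n:ℝ) - 2 * (m:ℝ) - 3) * x * iteratedDeriv (n + 1) (gfun m) x
        + ((n:ℝ) + 1) * ((n:ℝ) - 2 * (m:ℝ) - 5) * iteratedDeriv n (gfun m) x := by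
  intro n
  induction n with
  | zero =>
    intro x hx
    have hf : HasDerivAt (fun t : ℝ => 1 - t ^ 2) (-(2 * x)) x := by
      simpa using (hasDerivAt_pow 2 x).const_sub 1
    have hL : HasDerivAt (fun t : ℝ => (1 - t ^ 2) * iteratedDeriv 1 (gfun m) t)
        (-(2 * x) * iteratedDeriv 1 (gfun m) x + (1 - x ^ 2) * iteratedDeriv 2 (gfun m) x) x :=
      hf.mul (hD m 1 hx)
    have hg0 : HasDerivAt (gfun m) (iteratedDeriv 1 (gfun m) x) x := by
      have := hD m 0 hx; rwa [iteratedDeriv_zero] at this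
    have hR : HasDerivAt (fun t : ℝ => -(2 * (m:ℝ) + 5) * t * gfun m t)
        (-(2 * (m:ℝ) + 5) * 1 * gfun m x
          + -(2 * (m:ℝ) + 5) * x * iteratedDeriv 1 (gfun m) x) x :=
      ((hasDerivAt_id x).const_mul (-(2 * (m:ℝ) + 5))).mul hg0
    have hEq : (fun t : ℝ => -(2 * (m:ℝ) + 5) * t * gfun m t)
        =ᶠ[nhds x] (fun t : ℝ => (1 - t ^ 2) * iteratedDeriv 1 (gfun m) t) :=
      Filter.eventuallyEq_of_mem (isOpen_Ioo.mem_nhds hx) (fun t ht => (E0 m ht).symm)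
    have huniq := (hL.congr_of_eventuallyEq hEq).unique hR
    have hgz : iteratedDeriv 0 (gfun m) x = gfun m x := by rw [iteratedDeriv_zero]
    rw [hgz]
    push_cast
    linear_combination huniq
  | succ n ih =>
    intro x hx
    set a : ℝ := 2 * (n:ℝ) - 2 * (m:ℝ) - 3 with ha
    set b : ℝ := ((n:ℝ) + 1) * ((n:ℝ) - 2 * (m:ℝ) - 5) with hb
    have hf : HasDerivAt (fun t : ℝ => 1 - t ^ 2) (-(2 * x)) x := by
      simpa using (hasDerivAt_pow 2 x).const_sub 1
    have hL : HasDerivAt (fun t : ℝ => (1 - t ^ 2) * iteratedDeriv (n + 2) (gfun m) t)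
        (-(2 * x) * iteratedDeriv (n + 2) (gfun m) x
          + (1 - x ^ 2) * iteratedDeriv (n + 3) (gfun m) x) x :=
      hf.mul (hD m (n + 2) hx)
    have hR : HasDerivAt
        (fun t : ℝ => a * t * iteratedDeriv (n + 1) (gfun m) t
          + b * iteratedDeriv n (gfun m) t)
        ((a * 1 * iteratedDeriv (n + 1) (gfun m) x
          + a * x * iteratedDeriv (n + 2) (gfun m) x)
          + b * iteratedDeriv (n + 1) (gfun m) x) x :=
      (((hasDerivAt_id x).const_mul a).mul (hD m (n + 1) hx)).add ((hD m n hx).const_mul b)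
    have hEq : (fun t : ℝ => a * t * iteratedDeriv (n + 1) (gfun m) t
          + b * iteratedDeriv n (gfun m) t)
        =ᶠ[nhds x] (fun t : ℝ => (1 - t ^ 2) * iteratedDeriv (n + 2) (gfun m) t) :=
      Filter.eventuallyEq_of_mem (isOpen_Ioo.mem_nhds hx) (fun t ht => (ih t ht).symm)
    have huniq := (hL.congr_of_eventuallyEq hEq).unique hR
    have h3 : n + 1 + 2 = n + 3 := by ring
    have h2 : n + 1 + 1 = n + 2 := by ring
    rw [h3, h2]
    push_cast
    linear_combination huniq

noncomputable def Q1fun (m : ℕ) : ℝ → ℝ := fun t : ℝ =>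
  ((-1 : ℝ) ^ m / (2 ^ m * (Nat.factorial m : ℝ))) * (5 * t * (1 - t ^ 2) ^ (-(7:ℝ)/2))
      * iteratedDeriv m (gfun m) t
    + ((-1 : ℝ) ^ m / (2 ^ m * (Nat.factorial m : ℝ))) * (1 - t ^ 2) ^ (-(5:ℝ)/2)
      * iteratedDeriv (m+1) (gfun m) t

lemma hw5 {t : ℝ} (ht : t ∈ Set.Ioo (-1:ℝ) 1) :
    HasDerivAt (fun u : ℝ => (1 - u ^ 2) ^ (-(5:ℝ)/2))
      (5 * t * (1 - t ^ 2) ^ (-(7:ℝ)/2)) t := by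
  have hf : HasDerivAt (fun u : ℝ => 1 - u ^ 2) (-(2 * t)) t := by
    simpa using (hasDerivAt_pow 2 t).const_sub 1
  have h := hf.rpow_const (p := -(5:ℝ)/2) (Or.inl (hApos ht).ne')
  convert h using 1
  rw [show (-(5:ℝ)/2 - 1) = -(7:ℝ)/2 by norm_num]
  ring

lemma hw7 {t : ℝ} (ht : t ∈ Set.Ioo (-1:ℝ) 1) :
    HasDerivAt (fun u : ℝ => (1 - u ^ 2) ^ (-(7:ℝ)/2))
      (7 * t * (1 - t ^ 2) ^ (-(9:ℝ)/2)) t := by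
  have hf : HasDerivAt (fun u : ℝ => 1 - u ^ 2) (-(2 * t)) t := by
    simpa using (hasDerivAt_pow 2 t).const_sub 1
  have h := hf.rpow_const (p := -(7:ℝ)/2) (Or.inl (hApos ht).ne')
  convert h using 1
  rw [show (-(7:ℝ)/2 - 1) = -(9:ℝ)/2 by norm_num]
  ring

lemma hQ1 (m : ℕ) {t : ℝ} (ht : t ∈ Set.Ioo (-1:ℝ) 1) :
    HasDerivAt (rodriguesJacobi m) (Q1fun m t) t := by
  have hdef : rodriguesJacobi m = fun u : ℝ =>
      ((-1 : ℝ) ^ m / (2 ^ m * (Nat.factorial m : ℝ))) * (1 - u ^ 2) ^ (-(5 : ℝ) / 2)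
        * iteratedDeriv m (gfun m) u := rfl
  rw [hdef]
  exact (((hw5 ht).const_mul _).mul (hD m m ht))

/-- The function given by the Rodrigues formula for `P_m^{(5/2,5/2)}` satisfies the Jacobi
differential equation `(1 − x²) Q'' − 7x Q' + m(m+6) Q = 0` on `(−1,1)`. -/
theorem rodriguesJacobi_ode (m : ℕ) (x : ℝ) (hx : x ∈ Set.Ioo (-1 : ℝ) 1) :
    (1 - x ^ 2) * deriv (deriv (rodriguesJacobi m)) x
      - 7 * x * deriv (rodriguesJacobi m) x
      + (m : ℝ) * ((m : ℝ) + 6) * rodriguesJacobi m x = 0 := by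
  have hA := hApos hx
  set c : ℝ := ((-1 : ℝ) ^ m / (2 ^ m * (Nat.factorial m : ℝ))) with hc
  -- first derivative value
  have hd1 : deriv (rodriguesJacobi m) x = Q1fun m x := (hQ1 m hx).deriv
  -- second derivative
  have hev : deriv (rodriguesJacobi m) =ᶠ[nhds x] Q1fun m :=
    Filter.eventuallyEq_of_mem (isOpen_Ioo.mem_nhds hx) (fun t ht => (hQ1 m ht).deriv)
  have hinner : HasDerivAt (fun u : ℝ => 5 * u * (1 - u ^ 2) ^ (-(7:ℝ)/2))
      (5 * 1 * (1 - x ^ 2) ^ (-(7:ℝ)/2) + 5 * x * (7 * x * (1 - x ^ 2) ^ (-(9:ℝ)/2))) x :=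
    ((hasDerivAt_id x).const_mul 5).mul (hw7 hx)
  have hQ2 : HasDerivAt (Q1fun m)
      ((c * (5 * 1 * (1 - x ^ 2) ^ (-(7:ℝ)/2) + 5 * x * (7 * x * (1 - x ^ 2) ^ (-(9:ℝ)/2)))
          * iteratedDeriv m (gfun m) x
        + c * (5 * x * (1 - x ^ 2) ^ (-(7:ℝ)/2)) * iteratedDeriv (m+1) (gfun m) x)
       + (c * (5 * x * (1 - x ^ 2) ^ (-(7:ℝ)/2)) * iteratedDeriv (m+1) (gfun m) x
        + c * (1 - x ^ 2) ^ (-(5:ℝ)/2) * iteratedDeriv (m+2) (gfun m) x)) x := by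
    exact ((hinner.const_mul c).mul (hD m m hx)).add
      (((hw5 hx).const_mul c).mul (hD m (m+1) hx))
  have hdd : deriv (deriv (rodriguesJacobi m)) x
      = (c * (5 * 1 * (1 - x ^ 2) ^ (-(7:ℝ)/2) + 5 * x * (7 * x * (1 - x ^ 2) ^ (-(9:ℝ)/2)))
          * iteratedDeriv m (gfun m) x
        + c * (5 * x * (1 - x ^ 2) ^ (-(7:ℝ)/2)) * iteratedDeriv (m+1) (gfun m) x)
       + (c * (5 * x * (1 - x ^ 2) ^ (-(7:ℝ)/2)) * iteratedDeriv (m+1) (gfun m) x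
        + c * (1 - x ^ 2) ^ (-(5:ℝ)/2) * iteratedDeriv (m+2) (gfun m) x) := by
    rw [hev.deriv_eq]; exact hQ2.deriv
  have hQx : rodriguesJacobi m x = c * (1 - x ^ 2) ^ (-(5:ℝ)/2) * iteratedDeriv m (gfun m) x :=
    rfl
  have hODE := jacobi_aux m m x hx
  have hW7 : (1 - x ^ 2) * (1 - x ^ 2) ^ (-(7:ℝ)/2) = (1 - x ^ 2) ^ (-(5:ℝ)/2) := by
    rw [show (-(5:ℝ)/2) = 1 + -(7:ℝ)/2 by norm_num, Real.rpow_add hA, Real.rpow_one]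
  have hW9 : (1 - x ^ 2) * (1 - x ^ 2) ^ (-(9:ℝ)/2) = (1 - x ^ 2) ^ (-(7:ℝ)/2) := by
    rw [show (-(7:ℝ)/2) = 1 + -(9:ℝ)/2 by norm_num, Real.rpow_add hA, Real.rpow_one]
  rw [hdd, hd1, hQx]
  unfold Q1fun
  rw [← hc, ← hW7, ← hW9]
  linear_combination (c * (1 - x ^ 2) ^ 2 * (1 - x ^ 2) ^ (-(9:ℝ)/2)) * hODE
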